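/- Let V be a finite type and let E be a set of permutations of V, each of which is a 3-cycle. Define a simple graph on V by joining u and v (u ≠ v) whenever some σ ∈ E has both u and v in its support. If this graph is connected, then the subgroup of Perm V generated by E equals the alternating group on V. -/

import Mathlib

open Function

/-- The shift map on `ℤ → A`. -/
def shiftMap (A : Type*) : (ℤ → A) → (ℤ → A) := fun x i => x (i + 1)

/-- The shift map as a permutation of `ℤ → A`. -/
def shiftPerm (A : Type*) : Equiv.Perm (ℤ → A) where
  toFun := shiftMap A
  invFun x i := x (i - 1)
  left_inv x := funext fun i => by simp [shiftMap]
  right_inv x := funext fun i => by simp [shiftMap]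

/-- Finite types carry the discrete topology. -/
instance fintypeDiscreteTopology (A : Type*) [Fintype A] : TopologicalSpace A := ⊥

/-- The automorphism group of the full shift `A^ℤ`: shift-commuting self-homeomorphisms of
`ℤ → A`, as a subgroup of the permutation group of `ℤ → A`. -/
def FullShiftAut (A : Type*) [Fintype A] : Subgroup (Equiv.Perm (ℤ → A)) where
  carrier := { f | Continuous ⇑f ∧ Continuous ⇑f.symm ∧
      ∀ x, f (shiftMap A x) = shiftMap A (f x) }
  one_mem' := ⟨continuous_id, continuous_id, fun _ => rfl⟩
  mul_mem' := by
    rintro f g ⟨hf1, hf2, hf3⟩ ⟨hg1, hg2, hg3⟩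
    refine ⟨?_, ?_, fun x => ?_⟩
    · exact hf1.comp hg1
    · exact hg2.comp hf2
    · show f (g (shiftMap A x)) = shiftMap A (f (g x))
      rw [hg3, hf3]
  inv_mem' := by
    rintro f ⟨hf1, hf2, hf3⟩
    refine ⟨hf2, hf1, fun x => ?_⟩
    apply f.injective
    rw [show ∀ y, f (f⁻¹ y) = y from fun y => f.apply_symm_apply y, hf3,
      show ∀ y, f (f⁻¹ y) = y from fun y => f.apply_symm_apply y]

/-- The symbol permutation determined by a permutation of the alphabet. -/
def symbolPerm {A : Type*} (π : Equiv.Perm A) : Equiv.Perm (ℤ → A) :=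
  Equiv.piCongrRight fun _ => π

/-- The partial shift on the first track. -/
def partialShift₁ (B C : Type*) : Equiv.Perm (ℤ → B × C) where
  toFun x i := ((x (i + 1)).1, (x i).2)
  invFun x i := ((x (i - 1)).1, (x i).2)
  left_inv x := funext fun i => by simp
  right_inv x := funext fun i => by simp

/-- The partial shift on the second track. -/
def partialShift₂ (B C : Type*) : Equiv.Perm (ℤ → B × C) where
  toFun x i := ((x i).1, (x (i + 1)).2)
  invFun x i := ((x i).1, (x (i - 1)).2)
  left_inv x := funext fun i => by simp
  right_inv x := funext fun i => by simp

/-- `PAut[B;C]`: the subgroup of the automorphism group of `(B × C)^ℤ` generated by the two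
partial shifts and all symbol permutations. -/
def PAut (B C : Type*) : Subgroup (Equiv.Perm (ℤ → B × C)) :=
  Subgroup.closure
    ({partialShift₁ B C, partialShift₂ B C} ∪ Set.range (symbolPerm (A := B × C)))

set_option linter.unusedSectionVars false


namespace Stmt4Aux

open Equiv Equiv.Perm

variable {V : Type} [Fintype V] [DecidableEq V]

/-- The 3-cycle sending `x ↦ z ↦ y ↦ x`. -/
def tc (x y z : V) : Equiv.Perm V := Equiv.swap x y * Equiv.swap x z

lemma tc_apply1 {x y z : V} (hzx : z ≠ x) (hzy : z ≠ y) : tc x y z x = z := by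
  simp [tc, Equiv.Perm.mul_apply, Equiv.swap_apply_of_ne_of_ne hzx hzy]

lemma tc_apply2 {x y z : V} (hyx : y ≠ x) (hyz : y ≠ z) : tc x y z y = x := by
  simp [tc, Equiv.Perm.mul_apply, Equiv.swap_apply_of_ne_of_ne hyx hyz]

lemma tc_apply3 (x y z : V) : tc x y z z = y := by
  simp [tc, Equiv.Perm.mul_apply]

lemma tc_apply_of_ne {x y z a : V} (hax : a ≠ x) (hay : a ≠ y) (haz : a ≠ z) :
    tc x y z a = a := by
  simp [tc, Equiv.Perm.mul_apply, Equiv.swap_apply_of_ne_of_ne hax hay,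
    Equiv.swap_apply_of_ne_of_ne hax haz]

lemma tc_conj (σ : Equiv.Perm V) (x y z : V) :
    tc (σ x) (σ y) (σ z) = σ * tc x y z * σ⁻¹ := by
  simp only [tc, Equiv.swap_apply_apply]
  group

lemma tc_inv (x y z : V) : (tc x y z)⁻¹ = tc x z y := by
  simp [tc, mul_inv_rev]

lemma tc_rot {x y z : V} (hxy : x ≠ y) (hxz : x ≠ z) (hyz : y ≠ z) :
    tc x y z = tc y z x := by
  ext a
  by_cases hax : a = x
  · subst hax
    rw [tc_apply1 hxz.symm hyz.symm, tc_apply3]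
  by_cases hay : a = y
  · subst hay
    rw [tc_apply2 hxy.symm hyz, tc_apply1 hxy hxz]
  by_cases haz : a = z
  · subst haz
    rw [tc_apply3, tc_apply2 hyz.symm hxz.symm]
  · rw [tc_apply_of_ne hax hay haz, tc_apply_of_ne hay haz hax]

lemma tc_isThreeCycle {x y z : V} (hxy : x ≠ y) (hxz : x ≠ z) (hyz : y ≠ z) :
    (tc x y z).IsThreeCycle :=
  Equiv.Perm.isThreeCycle_swap_mul_swap_same hxy hxz hyz

lemma support_tc {x y z : V} (hxy : x ≠ y) (hxz : x ≠ z) (hyz : y ≠ z) :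
    (tc x y z).support = {x, y, z} := by
  ext a
  simp only [Equiv.Perm.mem_support, Finset.mem_insert, Finset.mem_singleton]
  constructor
  · intro h
    by_contra hc
    push_neg at hc
    exact h (tc_apply_of_ne hc.1 hc.2.1 hc.2.2)
  · rintro (rfl | rfl | rfl)
    · rw [tc_apply1 hxz.symm hyz.symm]; exact hxz.symm
    · rw [tc_apply2 hxy.symm hyz]; exact hxy
    · rw [tc_apply3]; exact hyz

lemma exists_tc {f : Equiv.Perm V} (hf : f.IsThreeCycle) :
    ∃ x y z : V, x ≠ y ∧ x ≠ z ∧ y ≠ z ∧ f = tc x y z := by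
  have hcard : f.support.card = 3 := hf.card_support
  have hne : f.support.Nonempty := Finset.card_pos.mp (by rw [hcard]; norm_num)
  obtain ⟨x, hx⟩ := hne
  set z := f x with hz
  set y := f z with hy
  have hzx : z ≠ x := Equiv.Perm.mem_support.mp hx
  have hzsup : z ∈ f.support := Equiv.Perm.apply_mem_support.mpr hx
  have hyz : y ≠ z := Equiv.Perm.mem_support.mp hzsup
  have h3 : f ^ 3 = 1 := by
    have := pow_orderOf_eq_one f
    rwa [hf.orderOf] at this
  have hfy : f y = x := by
    have : (f ^ 3) x = x := by rw [h3]; rfl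
    simpa [pow_succ, Equiv.Perm.mul_apply, ← hz, ← hy] using this
  have hyx : y ≠ x := fun h => hzx (by rw [← hfy, h, ← hz])
  have hsup : f.support = {x, y, z} := by
    refine (Finset.eq_of_subset_of_card_le ?_ ?_).symm
    · intro a ha
      simp only [Finset.mem_insert, Finset.mem_singleton] at ha
      rcases ha with rfl | rfl | rfl
      · exact hx
      · exact Equiv.Perm.apply_mem_support.mpr hzsup
      · exact hzsup
    · rw [hcard]
      rw [Finset.card_insert_of_notMem (by simp [hyx.symm, hzx.symm]),
        Finset.card_insert_of_notMem (by simp [hyz]), Finset.card_singleton]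
  refine ⟨x, y, z, hyx.symm, hzx.symm, hyz, ?_⟩
  ext a
  by_cases hax : a = x
  · subst hax; rw [tc_apply1 hzx hyz.symm]
  by_cases hay : a = y
  · subst hay; rw [tc_apply2 hyx hyz]; exact hfy
  by_cases haz : a = z
  · subst haz; rw [tc_apply3]
  · rw [tc_apply_of_ne hax hay haz]
    refine Equiv.Perm.notMem_support.mp ?_
    rw [hsup]
    simp [hax, hay, haz]


def GoodS (G : Subgroup (Equiv.Perm V)) (S : Finset V) : Prop :=
  ∀ x ∈ S, ∀ y ∈ S, ∀ z ∈ S, x ≠ y → x ≠ z → y ≠ z → tc x y z ∈ G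

lemma goodS_triple (G : Subgroup (Equiv.Perm V)) {p q r : V}
    (hpq : p ≠ q) (hpr : p ≠ r) (hqr : q ≠ r) (h : tc p q r ∈ G) :
    GoodS G {p, q, r} := by
  have h1 : tc p q r ∈ G := h
  have h2 : tc q r p ∈ G := by rwa [← tc_rot hpq hpr hqr]
  have h3 : tc r p q ∈ G := by rwa [tc_rot hpq hpr hqr, tc_rot hqr hpq.symm hpr.symm] at h
  have h4 : tc p r q ∈ G := by rw [← tc_inv]; exact inv_mem h
  have h5 : tc r q p ∈ G := by rwa [tc_rot hpr hpq hqr.symm] at h4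
  have h6 : tc q p r ∈ G := by rwa [tc_rot hqr.symm hpr.symm hpq.symm] at h5
  intro x hx y hy z hz hxy hxz hyz
  simp only [Finset.mem_insert, Finset.mem_singleton] at hx hy hz
  rcases hx with rfl | rfl | rfl <;> rcases hy with rfl | rfl | rfl <;>
    rcases hz with rfl | rfl | rfl <;>
    first
      | exact absurd rfl hxy
      | exact absurd rfl hxz
      | exact absurd rfl hyz
      | exact h1
      | exact h2
      | exact h3
      | exact h4
      | exact h5
      | exact h6

lemma add (G : Subgroup (Equiv.Perm V)) {S : Finset V} (hS : GoodS G S) {a b x : V}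
    (ha : a ∈ S) (hb : b ∈ S) (hab : a ≠ b) (hx : x ∉ S) (h : tc a b x ∈ G) :
    GoodS G (insert x S) := by
  have hne : ∀ u ∈ S, u ≠ x := fun u hu e => hx (e ▸ hu)
  have swapP : ∀ u v, u ∈ S → v ∈ S → u ≠ v → tc u v x ∈ G → tc v u x ∈ G := by
    intro u v hu hv huv hG
    have hux := hne u hu
    have hvx := hne v hv
    have he : (tc u v x)⁻¹ = tc v u x := by
      rw [tc_inv, tc_rot hux huv hvx.symm, tc_rot hvx.symm hux.symm huv.symm]
    rw [← he]
    exact inv_mem hG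
  have step1 : ∀ u v c, u ∈ S → v ∈ S → c ∈ S → c ≠ u → c ≠ v → u ≠ v →
      tc u v x ∈ G → tc v c x ∈ G := by
    intro u v c hu hv hc hcu hcv huv hG
    have hσ : tc u c v ∈ G := hS u hu c hc v hv hcu.symm huv hcv
    have hkey := tc_conj (tc u c v) u v x
    rw [tc_apply1 huv.symm hcv.symm, tc_apply3,
      tc_apply_of_ne (hne u hu).symm (hne c hc).symm (hne v hv).symm] at hkey
    rw [hkey]
    exact mul_mem (mul_mem hσ hG) (inv_mem hσ)
  have allP : ∀ u v, u ∈ S → v ∈ S → u ≠ v → tc u v x ∈ G := by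
    intro u v hu hv huv
    by_cases hua : u = a
    · subst hua
      by_cases hvb : v = b
      · subst hvb; exact h
      · have h1 : tc b u x ∈ G := swapP u b hu hb hab h
        exact step1 b u v hb hu hv hvb huv.symm hab.symm h1
    · by_cases hub : u = b
      · subst hub
        by_cases hva : v = a
        · subst hva; exact swapP v u hv hu hab h
        · exact step1 a u v ha hu hv hva huv.symm (fun e => hua e.symm) h
      · have h2 : tc b u x ∈ G := step1 a b u ha hb hu hua hub hab h
        by_cases hvb : v = b
        · subst hvb; exact swapP v u hv hu (fun e => hub e.symm) h2
        · by_cases hva : v = a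
          · subst hva; exact step1 b u v hb hu hv hab (fun e => hua e.symm)
              (fun e => hub e.symm) h2
          · exact step1 b u v hb hu hv hvb huv.symm (fun e => hub e.symm) h2
  intro u hu v hv w hw huv huw hvw
  rcases Finset.mem_insert.mp hu with rfl | hu'
  · rcases Finset.mem_insert.mp hv with hv' | hv'
    · exact absurd hv'.symm huv
    rcases Finset.mem_insert.mp hw with hw' | hw'
    · exact absurd hw'.symm huw
    rw [tc_rot huv huw hvw]
    exact allP v w hv' hw' hvw
  · rcases Finset.mem_insert.mp hv with hv' | hv'
    · subst hv'
      rcases Finset.mem_insert.mp hw with hw' | hw'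
      · exact absurd hw'.symm hvw
      have h1 : u ≠ v := huv
      rw [tc_rot huv huw hvw, tc_rot hvw huv.symm huw.symm]
      exact allP w u hw' hu' (fun e => huw e.symm)
    · rcases Finset.mem_insert.mp hw with hw' | hw'
      · subst hw'
        exact allP u v hu' hv' huv
      · exact hS u hu' v hv' w hw' huv huw hvw

lemma merge2 (G : Subgroup (Equiv.Perm V)) {S : Finset V} (hS : GoodS G S)
    (hcard : 3 ≤ S.card) {p q r : V} (hp : p ∈ S) (hq : q ∈ S) (hr : r ∉ S)
    (hpq : p ≠ q) (hpr : p ≠ r) (hqr : q ≠ r) (h : tc p q r ∈ G) :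
    GoodS G (insert r S) := by
  obtain ⟨a, haS, hap, haq⟩ : ∃ a ∈ S, a ≠ p ∧ a ≠ q := by
    by_contra hc
    push_neg at hc
    have hsub : S ⊆ {p, q} := by
      intro u hu
      by_cases hup : u = p
      · simp [hup]
      · simp [hc u hu hup]
    have h1 := Finset.card_le_card hsub
    have h2 : ({p, q} : Finset V).card ≤ 2 :=
      (Finset.card_insert_le _ _).trans (by simp)
    omega
  have hσ : tc p q a ∈ G := hS p hp q hq a haS hpq hap.symm haq.symm
  have har : a ≠ r := fun e => hr (e ▸ haS)
  have hkey := tc_conj (tc p q r) p q a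
  rw [tc_apply1 hpr.symm hqr.symm, tc_apply2 hpq.symm hqr,
    tc_apply_of_ne hap haq har] at hkey
  have h2 : tc r p a ∈ G := by rw [hkey]; exact mul_mem (mul_mem h hσ) (inv_mem h)
  have h3 : tc p a r ∈ G := by rwa [tc_rot hpr.symm har.symm hap.symm] at h2
  exact add G hS hp haS hap.symm hr h3

lemma merge1 (G : Subgroup (Equiv.Perm V)) {S : Finset V} (hS : GoodS G S)
    (hcard : 3 ≤ S.card) {p q r : V} (hp : p ∈ S) (hq : q ∉ S) (hr : r ∉ S)
    (hpq : p ≠ q) (hpr : p ≠ r) (hqr : q ≠ r) (h : tc p q r ∈ G) :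
    GoodS G (insert q (insert r S)) := by
  obtain ⟨a, ha, b, hb, hab⟩ : ∃ a ∈ S \ {p}, ∃ b ∈ S \ {p}, a ≠ b := by
    apply Finset.one_lt_card.mp
    rw [Finset.card_sdiff_of_subset (by simpa using hp), Finset.card_singleton]
    omega
  rw [Finset.mem_sdiff, Finset.mem_singleton] at ha hb
  obtain ⟨haS, hap⟩ := ha
  obtain ⟨hbS, hbp⟩ := hb
  have haq : a ≠ q := fun e => hq (e ▸ haS)
  have har : a ≠ r := fun e => hr (e ▸ haS)
  have hbq : b ≠ q := fun e => hq (e ▸ hbS)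
  have hbr : b ≠ r := fun e => hr (e ▸ hbS)
  have hσ : tc p a b ∈ G := hS p hp a haS b hbS (Ne.symm hap) (Ne.symm hbp) hab
  have hkey := tc_conj (tc p q r) p a b
  rw [tc_apply1 hpr.symm hqr.symm, tc_apply_of_ne hap haq har,
    tc_apply_of_ne hbp hbq hbr] at hkey
  have h2 : tc r a b ∈ G := by rw [hkey]; exact mul_mem (mul_mem h hσ) (inv_mem h)
  have h3 : tc a b r ∈ G := by rwa [tc_rot har.symm hbr.symm hab] at h2
  have hS1 : GoodS G (insert r S) := add G hS haS hbS hab hr h3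
  have hcard1 : 3 ≤ (insert r S).card :=
    hcard.trans (Finset.card_le_card (Finset.subset_insert _ _))
  have h4 : tc r p q ∈ G := by
    rwa [tc_rot hpq hpr hqr, tc_rot hqr hpq.symm hpr.symm] at h
  exact merge2 G hS1 hcard1 (Finset.mem_insert_self r S)
    (Finset.mem_insert_of_mem hp) (by simp [hqr, hq]) hpr.symm hqr.symm hpq h4

lemma cross {Γ : SimpleGraph V} {S : Finset V} {u v : V} (w : Γ.Walk u v) :
    u ∈ S → v ∉ S → ∃ a b, Γ.Adj a b ∧ a ∈ S ∧ b ∉ S := by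
  induction w with
  | nil => intro h h'; exact absurd h h'
  | @cons a b c hadj p ih =>
    intro ha hc
    by_cases hb : b ∈ S
    · exact ih hb hc
    · exact ⟨a, b, hadj, ha, hb⟩

lemma exists_adj {Γ : SimpleGraph V} {u v : V} (w : Γ.Walk u v) (huv : u ≠ v) :
    ∃ a b, Γ.Adj a b := by
  cases w with
  | nil => exact absurd rfl huv
  | cons hadj p => exact ⟨_, _, hadj⟩

lemma expand (G : Subgroup (Equiv.Perm V)) (Γ : SimpleGraph V) (hconn : Γ.Connected)
    (hedge : ∀ a b : V, Γ.Adj a b → ∃ p q r : V, p ≠ q ∧ p ≠ r ∧ q ≠ r ∧ tc p q r ∈ G ∧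
      (a = p ∨ a = q ∨ a = r) ∧ (b = p ∨ b = q ∨ b = r)) :
    ∀ (n : ℕ) (S : Finset V), GoodS G S → 3 ≤ S.card → Fintype.card V ≤ S.card + n →
      GoodS G Finset.univ := by
  intro n
  induction n with
  | zero =>
    intro S hS hc3 hcv
    have hU : S = Finset.univ :=
      Finset.eq_univ_of_card S (le_antisymm (Finset.card_le_univ S) (by simpa using hcv))
    exact hU ▸ hS
  | succ n ih =>
    intro S hS hc3 hcv
    by_cases hU : S = Finset.univ
    · exact hU ▸ hS
    · obtain ⟨v, hv⟩ : ∃ v, v ∉ S := by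
        by_contra hc; push_neg at hc
        exact hU (Finset.eq_univ_iff_forall.mpr hc)
      obtain ⟨u, hu⟩ : S.Nonempty := Finset.card_pos.mp (by omega)
      obtain ⟨w⟩ := hconn.preconnected u v
      obtain ⟨x, y, hadj, hxS, hyS⟩ := cross w hu hv
      obtain ⟨p, q, r, hpq, hpr, hqr, hG, hx3, hy3⟩ := hedge x y hadj
      suffices hex : ∃ S' : Finset V, GoodS G S' ∧ S ⊆ S' ∧ y ∈ S' by
        obtain ⟨S', hS', hsub, hyS'⟩ := hex
        have hlt : S.card < S'.card :=
          Finset.card_lt_card ⟨hsub, fun hc => hyS (hc hyS')⟩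
        exact ih S' hS' (by omega) (by omega)
      by_cases hpS : p ∈ S <;> by_cases hqS : q ∈ S <;> by_cases hrS : r ∈ S
      · exact absurd (by rcases hy3 with rfl | rfl | rfl <;> assumption) hyS
      · refine ⟨insert r S, merge2 G hS hc3 hpS hqS hrS hpq hpr hqr hG,
          Finset.subset_insert _ _, ?_⟩
        rcases hy3 with rfl | rfl | rfl
        · exact absurd hpS hyS
        · exact absurd hqS hyS
        · exact Finset.mem_insert_self _ _
      · have h' : tc r p q ∈ G := by
          rwa [tc_rot hpq hpr hqr, tc_rot hqr hpq.symm hpr.symm] at hG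
        refine ⟨insert q S, merge2 G hS hc3 hrS hpS hqS hpr.symm hqr.symm hpq h',
          Finset.subset_insert _ _, ?_⟩
        rcases hy3 with rfl | rfl | rfl
        · exact absurd hpS hyS
        · exact Finset.mem_insert_self _ _
        · exact absurd hrS hyS
      · refine ⟨insert q (insert r S), merge1 G hS hc3 hpS hqS hrS hpq hpr hqr hG,
          (Finset.subset_insert _ _).trans (Finset.subset_insert _ _), ?_⟩
        rcases hy3 with rfl | rfl | rfl
        · exact absurd hpS hyS
        · exact Finset.mem_insert_self _ _
        · exact Finset.mem_insert_of_mem (Finset.mem_insert_self _ _)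
      · have h' : tc q r p ∈ G := by rwa [tc_rot hpq hpr hqr] at hG
        refine ⟨insert p S, merge2 G hS hc3 hqS hrS hpS hqr hpq.symm hpr.symm h',
          Finset.subset_insert _ _, ?_⟩
        rcases hy3 with rfl | rfl | rfl
        · exact Finset.mem_insert_self _ _
        · exact absurd hqS hyS
        · exact absurd hrS hyS
      · have h' : tc q r p ∈ G := by rwa [tc_rot hpq hpr hqr] at hG
        refine ⟨insert r (insert p S), merge1 G hS hc3 hqS hrS hpS hqr hpq.symm hpr.symm h',
          (Finset.subset_insert _ _).trans (Finset.subset_insert _ _), ?_⟩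
        rcases hy3 with rfl | rfl | rfl
        · exact Finset.mem_insert_of_mem (Finset.mem_insert_self _ _)
        · exact absurd hqS hyS
        · exact Finset.mem_insert_self _ _
      · have h' : tc r p q ∈ G := by
          rwa [tc_rot hpq hpr hqr, tc_rot hqr hpq.symm hpr.symm] at hG
        refine ⟨insert p (insert q S), merge1 G hS hc3 hrS hpS hqS hpr.symm hqr.symm hpq h',
          (Finset.subset_insert _ _).trans (Finset.subset_insert _ _), ?_⟩
        rcases hy3 with rfl | rfl | rfl
        · exact Finset.mem_insert_self _ _
        · exact Finset.mem_insert_of_mem (Finset.mem_insert_self _ _)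
        · exact absurd hrS hyS
      · exact absurd hxS (by rcases hx3 with rfl | rfl | rfl <;> · exact (by assumption))

end Stmt4Aux

/-- if the supports of a set `E` of 3-cycles form a weakly connected hypergraph
(i.e. the graph joining two distinct vertices lying in the support of a common element of `E`
is connected), then `E` generates the alternating group. -/
theorem stmt4 (V : Type) [Fintype V] [DecidableEq V]
    (E : Set (Equiv.Perm V)) (hE : ∀ σ ∈ E, σ.IsThreeCycle)
    (hconn : (SimpleGraph.fromRel
        (fun u v => ∃ σ ∈ E, u ∈ σ.support ∧ v ∈ σ.support)).Connected) :
    Subgroup.closure E = alternatingGroup V := by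
  classical
  open Stmt4Aux in
  apply le_antisymm
  · exact (Subgroup.closure_le _).mpr fun σ hσ => (hE σ hσ).mem_alternatingGroup
  · rw [← Equiv.Perm.closure_three_cycles_eq_alternating]
    apply (Subgroup.closure_le _).mpr
    intro f hf
    obtain ⟨x0, y0, z0, hxy0, hxz0, hyz0, rfl⟩ := Stmt4Aux.exists_tc hf
    set Γ := SimpleGraph.fromRel
      (fun u v => ∃ σ ∈ E, u ∈ σ.support ∧ v ∈ σ.support) with hΓ
    set G := Subgroup.closure E with hGdef
    have hedge : ∀ a b : V, Γ.Adj a b → ∃ p q r : V,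
        p ≠ q ∧ p ≠ r ∧ q ≠ r ∧ Stmt4Aux.tc p q r ∈ G ∧
        (a = p ∨ a = q ∨ a = r) ∧ (b = p ∨ b = q ∨ b = r) := by
      intro a b hab
      rw [hΓ, SimpleGraph.fromRel_adj] at hab
      obtain ⟨hne, hrel⟩ := hab
      have hsym : ∃ σ ∈ E, a ∈ σ.support ∧ b ∈ σ.support := by
        rcases hrel with h | h
        · exact h
        · obtain ⟨σ, h1, h2, h3⟩ := h; exact ⟨σ, h1, h3, h2⟩
      obtain ⟨σ, hσE, haσ, hbσ⟩ := hsym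
      obtain ⟨p, q, r, hpq, hpr, hqr, heq⟩ := Stmt4Aux.exists_tc (hE σ hσE)
      have hmemG : Stmt4Aux.tc p q r ∈ G := heq ▸ Subgroup.subset_closure hσE
      have hsupp : σ.support = {p, q, r} := by
        rw [heq, Stmt4Aux.support_tc hpq hpr hqr]
      rw [hsupp] at haσ hbσ
      simp only [Finset.mem_insert, Finset.mem_singleton] at haσ hbσ
      exact ⟨p, q, r, hpq, hpr, hqr, hmemG, haσ, hbσ⟩
    obtain ⟨w⟩ := hconn.preconnected x0 y0
    obtain ⟨a, b, hab⟩ := Stmt4Aux.exists_adj w hxy0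
    obtain ⟨p, q, r, hpq, hpr, hqr, hmemG, _, _⟩ := hedge a b hab
    have hcard : ({p, q, r} : Finset V).card = 3 := by
      rw [Finset.card_insert_of_notMem (by simp [hpq, hpr]),
        Finset.card_insert_of_notMem (by simp [hqr]), Finset.card_singleton]
    have hgood : Stmt4Aux.GoodS G {p, q, r} :=
      Stmt4Aux.goodS_triple G hpq hpr hqr hmemG
    have huniv : Stmt4Aux.GoodS G Finset.univ :=
      Stmt4Aux.expand G Γ hconn hedge (Fintype.card V) {p, q, r} hgood
        (by omega) (by omega)
    exact huniv x0 (Finset.mem_univ _) y0 (Finset.mem_univ _) z0 (Finset.mem_univ _)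
      hxy0 hxz0 hyz0
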